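/- For all 0 < η < 1, 1 < α < 1/η, and (t,s) ∈ [0,1]×[0,1], the partial derivative ∂G/∂t(t,s) satisfies 0 ≤ ∂G/∂t(t,s) ≤ g₁(s) where g₁(s) = (1-s)/(1-αη). -/
import Mathlib


open Set

noncomputable def greenGt (η α t s : ℝ) : ℝ :=
  (1 / (1 - α * η)) *
    (if s ≤ min η t then s * (1 - α * η) + t * s * (α - 1)
     else if t ≤ s ∧ s ≤ η then t * (1 - α * η) + t * s * (α - 1)
     else if η ≤ s ∧ s ≤ t then s * (1 - α * η) + t * (α * η - s)
     else t * (1 - s))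

noncomputable def g1 (η α s : ℝ) : ℝ := (1 - s) / (1 - α * η)

theorem stmt2 (η α : ℝ) (hη0 : 0 < η) (hη1 : η < 1) (hα1 : 1 < α) (hα2 : α < 1 / η) :
    ∀ t ∈ Icc (0:ℝ) 1, ∀ s ∈ Icc (0:ℝ) 1,
      0 ≤ greenGt η α t s ∧ greenGt η α t s ≤ g1 η α s := by
  have hαη : α * η < 1 := by
    have := (lt_div_iff₀ hη0).mp hα2
    linarith
  have hd : 0 < 1 - α * η := by linarith
  intro t ht s hs
  obtain ⟨ht0, ht1⟩ := ht
  obtain ⟨hs0, hs1⟩ := hs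
  have key : ∀ X : ℝ, 0 ≤ X → X ≤ 1 - s →
      0 ≤ (1 / (1 - α * η)) * X ∧ (1 / (1 - α * η)) * X ≤ g1 η α s := by
    intro X h0 h1
    constructor
    · positivity
    · rw [g1, one_div, inv_mul_eq_div]
      gcongr
  unfold greenGt
  split_ifs with h1 h2 h3
  · have hsη : s ≤ η := le_trans h1 (min_le_left _ _)
    have hst : s ≤ t := le_trans h1 (min_le_right _ _)
    refine key _ ?_ ?_
    · nlinarith [mul_nonneg hs0 hd.le, mul_nonneg (mul_nonneg ht0 hs0) (sub_nonneg.mpr hα1.le)]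
    · nlinarith [mul_nonneg (mul_nonneg (sub_nonneg.mpr ht1) hs0) (sub_nonneg.mpr hα1.le),
        mul_nonneg (sub_nonneg.mpr hsη) (by nlinarith : (0:ℝ) ≤ α * (1 - η) + 1),
        mul_pos hd (by linarith : (0:ℝ) < 1 - η)]
  · obtain ⟨hts, hsη⟩ := h2
    refine key _ ?_ ?_
    · nlinarith [mul_nonneg ht0 hd.le, mul_nonneg (mul_nonneg ht0 hs0) (sub_nonneg.mpr hα1.le)]
    · nlinarith [mul_nonneg (sub_nonneg.mpr hts) hd.le,
        mul_nonneg (mul_nonneg (sub_nonneg.mpr hts) hs0) (sub_nonneg.mpr hα1.le),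
        mul_nonneg (mul_nonneg (sub_nonneg.mpr hsη) hs0) (sub_nonneg.mpr hα1.le),
        mul_nonneg (sub_nonneg.mpr hs1) (by linarith : (0:ℝ) ≤ 1 - η)]
  · obtain ⟨hηs, hst⟩ := h3
    have hαη0 : (0:ℝ) ≤ α * η := by positivity
    refine key _ ?_ ?_
    · rcases le_or_gt s (α * η) with h | h
      · nlinarith [mul_nonneg hs0 hd.le, mul_nonneg ht0 (sub_nonneg.mpr h)]
      · nlinarith [mul_nonneg (sub_nonneg.mpr ht1) (sub_nonneg.mpr h.le),
          mul_nonneg hαη0 (sub_nonneg.mpr hs1)]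
    · rcases le_or_gt s (α * η) with h | h
      · nlinarith [mul_nonneg (sub_nonneg.mpr ht1) (sub_nonneg.mpr h),
          mul_nonneg hd.le (sub_nonneg.mpr hs1)]
      · nlinarith [mul_nonneg (sub_nonneg.mpr hst) (sub_nonneg.mpr h.le),
          mul_self_nonneg (1 - s)]
  · refine key _ ?_ ?_
    · nlinarith [mul_nonneg ht0 (sub_nonneg.mpr hs1)]
    · nlinarith [mul_nonneg (sub_nonneg.mpr ht1) (sub_nonneg.mpr hs1)]
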